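/- Let r : ℝ^{2n} → ℝ be a non-negative quadratic form, s ∈ ℝ, and Ω an open set on which r(X) ≥ c⟨X⟩^{2β} for some c > 0 and β > 0. Then for every multi-index α there is C_α > 0 such that |∂^α (r(X)^s)| ≤ C_α r(X)^{s − |α|/2} for all X ∈ Ω. In particular |∇(r(X)^s)| ≤ C r(X)^{s − 1/2} on Ω. -/

import Mathlib

open Set

set_option maxHeartbeats 1000000 in
private lemma quad_iterated_bound {E : Type*} [NormedAddCommGroup E] [NormedSpace ℝ E]
    [FiniteDimensional ℝ E] (r : QuadraticForm ℝ E) (hr : ∀ X, 0 ≤ r X)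
    (s : ℝ) (Ω : Set E) (hΩ : IsOpen Ω) (hpos : ∀ X ∈ Ω, 0 < r X) (k : ℕ) :
    ∃ C > 0, ∀ X ∈ Ω,
      ‖iteratedFDeriv ℝ k (fun Y => (r Y) ^ s) X‖ ≤ C * (r X) ^ (s - (k : ℝ) / 2) := by
  classical
  -- a symmetric bilinear form with `Bl x x = r x`
  obtain ⟨Bl, hsym, hself, hexpand⟩ :
      ∃ Bl : LinearMap.BilinForm ℝ E, (∀ x y, Bl x y = Bl y x) ∧ (∀ x, Bl x x = r x) ∧
        (∀ (X v : E) (x : ℝ),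
          r (X + x • v) = r v * (x * x) + (2 * Bl X v) * x + r X) := by
    refine ⟨(2⁻¹ : ℝ) • r.polarBilin, ?_, ?_, ?_⟩
    · intro x y
      simp only [LinearMap.smul_apply, QuadraticMap.polarBilin_apply_apply, smul_eq_mul]
      rw [QuadraticMap.polar_comm]
    · intro x
      have h2 : r (x + x) = 4 * r x := by
        rw [← two_smul ℝ x, QuadraticMap.map_smul]
        norm_num [smul_eq_mul]
      simp only [LinearMap.smul_apply, QuadraticMap.polarBilin_apply_apply, smul_eq_mul,
        QuadraticMap.polar, h2]
      ring
    · intro X v x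
      have h0 : r (X + x • v) = r X + r (x • v) + QuadraticMap.polar r X (x • v) := by
        rw [QuadraticMap.polar]; ring
      rw [h0, QuadraticMap.map_smul, QuadraticMap.polar_smul_right]
      simp only [LinearMap.smul_apply, QuadraticMap.polarBilin_apply_apply, smul_eq_mul]
      ring
  -- a continuous bilinear version
  obtain ⟨bb, hbb⟩ : ∃ bb : E →L[ℝ] E →L[ℝ] ℝ, ∀ x y, bb x y = Bl x y :=
    ⟨LinearMap.toContinuousLinearMap
      ((LinearMap.toContinuousLinearMap :
          (E →ₗ[ℝ] ℝ) ≃ₗ[ℝ] (E →L[ℝ] ℝ)).toLinearMap.comp Bl), fun x y => by simp⟩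
  obtain ⟨rf, hrfdef⟩ : ∃ rf : E → ℝ, rf = fun Y => bb Y Y := ⟨_, rfl⟩
  have hrf_apply : ∀ Y, rf Y = bb Y Y := fun Y => by rw [hrfdef]
  have hre : ∀ Y, r Y = rf Y := fun Y => by rw [hrf_apply, hbb]; exact (hself Y).symm
  have hsm : ContDiff ℝ (⊤ : ℕ∞) rf := by
    rw [hrfdef]; exact ContDiff.clm_apply bb.contDiff contDiff_id
  -- the derivative
  obtain ⟨L, hL_apply⟩ : ∃ L : E →L[ℝ] E →L[ℝ] ℝ, ∀ X v, L X v = 2 * Bl X v :=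
    ⟨bb + ContinuousLinearMap.flip bb, fun X v => by
      simp only [ContinuousLinearMap.add_apply, ContinuousLinearMap.flip_apply, hbb]
      rw [hsym v X]; ring⟩
  have hderiv : ∀ X : E, HasFDerivAt rf (L X) X := by
    intro X
    have h := bb.hasFDerivAt_of_bilinear (hasFDerivAt_id X) (hasFDerivAt_id X)
    rw [hrfdef]
    refine h.congr_fderiv ?_
    ext v
    simp only [ContinuousLinearMap.add_apply, ContinuousLinearMap.precompR_apply,
      ContinuousLinearMap.precompL_apply, ContinuousLinearMap.compL_apply,
      ContinuousLinearMap.coe_comp', Function.comp_apply, ContinuousLinearMap.coe_id', id_eq,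
      hL_apply, hbb]
    rw [hsym v X]; ring
  have hfd : fderiv ℝ rf = ⇑L := funext fun X => (hderiv X).fderiv
  have hfdL : (fderiv ℝ (⇑L) : E → E →L[ℝ] E →L[ℝ] ℝ) = fun _ => L :=
    funext fun X => L.fderiv
  have hn1 : ∀ X : E, ‖iteratedFDeriv ℝ 1 rf X‖ = ‖L X‖ := by
    intro X
    rw [← norm_iteratedFDeriv_fderiv (n := 0), norm_iteratedFDeriv_zero, hfd]
  have hn2 : ∀ X : E, ‖iteratedFDeriv ℝ 2 rf X‖ = ‖L‖ := by
    intro X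
    rw [← norm_iteratedFDeriv_fderiv (n := 1), hfd,
      ← norm_iteratedFDeriv_fderiv (n := 0), norm_iteratedFDeriv_zero,
      ContinuousLinearMap.fderiv]
  have hn3 : ∀ (m : ℕ) (X : E), ‖iteratedFDeriv ℝ (m + 3) rf X‖ = 0 := by
    intro m X
    rw [← norm_iteratedFDeriv_fderiv (n := m + 2), hfd,
      ← norm_iteratedFDeriv_fderiv (n := m + 1), hfdL,
      iteratedFDeriv_const_of_ne (by omega : m + 1 ≠ 0)]
    simp
  -- Cauchy–Schwarz for the nonnegative form
  have hCS : ∀ X v : E, (Bl X v) ^ 2 ≤ r X * r v := by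
    intro X v
    have key : ∀ x : ℝ, 0 ≤ r v * (x * x) + (2 * Bl X v) * x + r X := by
      intro x
      rw [← hexpand X v x]; exact hr _
    have h := discrim_le_zero key
    rw [discrim] at h
    nlinarith [h]
  -- norm bound for the first derivative
  have hLX : ∀ X : E, ‖L X‖ ≤ 2 * Real.sqrt ‖bb‖ * Real.sqrt (r X) := by
    intro X
    refine ContinuousLinearMap.opNorm_le_bound _ (by positivity) (fun v => ?_)
    rw [hL_apply]
    have h1 : |Bl X v| ≤ Real.sqrt (r X) * Real.sqrt (r v) := by
      rw [← Real.sqrt_sq_eq_abs, ← Real.sqrt_mul (hr X)]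
      exact Real.sqrt_le_sqrt (hCS X v)
    have h2 : Real.sqrt (r v) ≤ Real.sqrt ‖bb‖ * ‖v‖ := by
      have hb1 := (bb v).le_opNorm v
      have hb2 := bb.le_opNorm v
      have h3 : r v ≤ ‖bb‖ * (‖v‖ * ‖v‖) := by
        rw [hre v, hrf_apply]
        calc bb v v ≤ |bb v v| := le_abs_self _
          _ = ‖bb v v‖ := (Real.norm_eq_abs _).symm
          _ ≤ ‖bb v‖ * ‖v‖ := hb1
          _ ≤ (‖bb‖ * ‖v‖) * ‖v‖ := by
              have := mul_le_mul_of_nonneg_right hb2 (norm_nonneg v)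
              linarith
          _ = ‖bb‖ * (‖v‖ * ‖v‖) := by ring
      calc Real.sqrt (r v) ≤ Real.sqrt (‖bb‖ * (‖v‖ * ‖v‖)) := Real.sqrt_le_sqrt h3
        _ = Real.sqrt ‖bb‖ * ‖v‖ := by
            rw [Real.sqrt_mul (norm_nonneg bb), Real.sqrt_mul_self (norm_nonneg v)]
    have hs1 : 0 ≤ Real.sqrt (r X) := Real.sqrt_nonneg _
    have hs2 : 0 ≤ Real.sqrt (r v) := Real.sqrt_nonneg _
    rw [Real.norm_eq_abs, abs_mul, abs_two]
    have h5 := mul_le_mul_of_nonneg_left h2 hs1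
    linarith [abs_nonneg (Bl X v)]
  -- the constants
  obtain ⟨g, hgdef⟩ : ∃ g : ℝ → ℝ, g = fun x => x ^ s := ⟨_, rfl⟩
  obtain ⟨Cg, hCgdef⟩ : ∃ Cg : ℝ,
      Cg = (∑ i ∈ Finset.range (k + 1), ‖iteratedFDeriv ℝ i g 1‖) + 1 := ⟨_, rfl⟩
  have hCg : 0 < Cg := by
    have h0 : 0 ≤ ∑ i ∈ Finset.range (k + 1), ‖iteratedFDeriv ℝ i g 1‖ :=
      Finset.sum_nonneg fun i _ => norm_nonneg _
    rw [hCgdef]; linarith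
  obtain ⟨K, hKdef⟩ : ∃ K : ℝ,
      K = max (2 * Real.sqrt ‖bb‖) (Real.sqrt ‖L‖) + 1 := ⟨_, rfl⟩
  have hKmax : 0 ≤ max (2 * Real.sqrt ‖bb‖) (Real.sqrt ‖L‖) :=
    le_trans (by positivity) (le_max_left _ _)
  have hK1 : 1 ≤ K := by rw [hKdef]; linarith
  have hK0 : 0 < K := by linarith
  refine ⟨(Nat.factorial k : ℝ) * Cg * K ^ k, by positivity, fun X hX => ?_⟩
  obtain ⟨t, htdef⟩ : ∃ t : ℝ, t = r X := ⟨_, rfl⟩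
  have ht : 0 < t := htdef ▸ hpos X hX
  have hstpos : 0 < Real.sqrt t := Real.sqrt_pos.2 ht
  have hst : Real.sqrt t * Real.sqrt t = t := Real.mul_self_sqrt ht.le
  obtain ⟨h, hhdef⟩ : ∃ h : E → ℝ, h = fun Y => t⁻¹ • rf Y := ⟨_, rfl⟩
  have hh_apply : ∀ Y, h Y = t⁻¹ * rf Y := fun Y => by rw [hhdef]; simp [smul_eq_mul]
  have hcomp : ∀ Y : E, (r Y) ^ s = (t ^ s • (g ∘ h)) Y := by
    intro Y
    have hrY : 0 ≤ rf Y := (hre Y) ▸ hr Y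
    show (r Y) ^ s = t ^ s * g (h Y)
    rw [hgdef, hh_apply, hre Y]
    show rf Y ^ s = t ^ s * (t⁻¹ * rf Y) ^ s
    rw [Real.mul_rpow (inv_nonneg.2 ht.le) hrY, ← mul_assoc,
      ← Real.mul_rpow ht.le (inv_nonneg.2 ht.le), mul_inv_cancel₀ ht.ne',
      Real.one_rpow, one_mul]
  have hgsm : ContDiffOn ℝ ((⊤ : ℕ∞) : WithTop ℕ∞) g (Ioi 0) := by
    rw [hgdef]
    exact fun x hx =>
      (Real.contDiffAt_rpow_const_of_ne (ne_of_gt hx)).contDiffWithinAt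
  have hhsm : ContDiff ℝ ((⊤ : ℕ∞) : WithTop ℕ∞) h := by
    rw [hhdef]; exact hsm.const_smul t⁻¹
  have hmaps : MapsTo h Ω (Ioi 0) := by
    intro Y hY
    have h1 : 0 < rf Y := (hre Y) ▸ hpos Y hY
    have h2 : 0 < h Y := by rw [hh_apply]; exact mul_pos (inv_pos.2 ht) h1
    exact mem_Ioi.2 h2
  obtain ⟨D, hDdef⟩ : ∃ D : ℝ, D = K / Real.sqrt t := ⟨_, rfl⟩
  have hD0 : 0 ≤ D := by rw [hDdef]; positivity
  have hkN : (k : WithTop ℕ∞) ≤ ((⊤ : ℕ∞) : WithTop ℕ∞) := by exact_mod_cast le_top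
  have hCbound : ∀ i, i ≤ k → ‖iteratedFDerivWithin ℝ i g (Ioi 0) (h X)‖ ≤ Cg := by
    intro i hi
    have hhX : h X = 1 := by
      rw [hh_apply, ← hre X, ← htdef, inv_mul_cancel₀ ht.ne']
    rw [hhX, iteratedFDerivWithin_of_isOpen i isOpen_Ioi (by norm_num : (1 : ℝ) ∈ Ioi 0)]
    have hle : ‖iteratedFDeriv ℝ i g 1‖ ≤ ∑ j ∈ Finset.range (k + 1), ‖iteratedFDeriv ℝ j g 1‖ :=
      Finset.single_le_sum (f := fun j => ‖iteratedFDeriv ℝ j g 1‖)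
        (fun j _ => norm_nonneg _) (Finset.mem_range.2 (Nat.lt_succ_of_le hi))
    rw [hCgdef]; linarith
  have hDbound : ∀ i, 1 ≤ i → i ≤ k → ‖iteratedFDerivWithin ℝ i h Ω X‖ ≤ D ^ i := by
    intro i h1i hik
    rw [iteratedFDerivWithin_of_isOpen i hΩ hX]
    have hsmul : iteratedFDeriv ℝ i h X = t⁻¹ • iteratedFDeriv ℝ i rf X := by
      rw [hhdef]
      exact iteratedFDeriv_const_smul_apply' (hsm.contDiffAt.of_le (by exact_mod_cast le_top))
    have hnrm : ‖t⁻¹ • iteratedFDeriv ℝ i rf X‖ = t⁻¹ * ‖iteratedFDeriv ℝ i rf X‖ := by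
      rw [norm_smul t⁻¹ (iteratedFDeriv ℝ i rf X), Real.norm_eq_abs,
        abs_of_pos (inv_pos.2 ht)]
    rw [hsmul, hnrm]
    rcases i with _ | _ | _ | m
    · omega
    · -- i = 1
      rw [pow_one, hn1 X, hDdef]
      have hM : 2 * Real.sqrt ‖bb‖ ≤ K := by
        rw [hKdef]; have := le_max_left (2 * Real.sqrt ‖bb‖) (Real.sqrt ‖L‖); linarith
      rw [le_div_iff₀ hstpos]
      have hL1 := hLX X
      rw [← htdef] at hL1
      calc t⁻¹ * ‖L X‖ * Real.sqrt t = t⁻¹ * (‖L X‖ * Real.sqrt t) := by ring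
        _ ≤ t⁻¹ * ((2 * Real.sqrt ‖bb‖ * Real.sqrt t) * Real.sqrt t) := by
            have h9 : (0 : ℝ) ≤ t⁻¹ := (inv_pos.2 ht).le
            gcongr
        _ = t⁻¹ * (2 * Real.sqrt ‖bb‖ * t) := by rw [mul_assoc, hst]
        _ = 2 * Real.sqrt ‖bb‖ * (t * t⁻¹) := by ring
        _ = 2 * Real.sqrt ‖bb‖ := by rw [mul_inv_cancel₀ ht.ne', mul_one]
        _ ≤ K := hM
    · -- i = 2
      rw [hn2 X, hDdef, div_pow]
      have h2 : (Real.sqrt t) ^ 2 = t := by rw [sq]; exact hst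
      rw [h2]
      have hLK : ‖L‖ ≤ K ^ 2 := by
        have h3 : Real.sqrt ‖L‖ ≤ K := by
          rw [hKdef]; have := le_max_right (2 * Real.sqrt ‖bb‖) (Real.sqrt ‖L‖); linarith
        have h4 : Real.sqrt ‖L‖ ^ 2 = ‖L‖ := Real.sq_sqrt (norm_nonneg L)
        nlinarith [Real.sqrt_nonneg ‖L‖]
      rw [inv_mul_eq_div]
      gcongr
    · -- i = m + 3
      rw [hn3 m X]
      simp only [mul_zero]
      positivity
  have key := norm_iteratedFDerivWithin_comp_le (𝕜 := ℝ) hgsm hhsm.contDiffOn hkN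
    isOpen_Ioi.uniqueDiffOn hΩ.uniqueDiffOn hmaps hX hCbound hDbound
  have hEq : (fun Y => (r Y) ^ s) = (t ^ s) • (g ∘ h) := funext hcomp
  have hcd : ContDiffOn ℝ (k : WithTop ℕ∞) (g ∘ h) Ω :=
    (hgsm.comp hhsm.contDiffOn hmaps).of_le hkN
  have hrpow : 0 < t ^ s := Real.rpow_pos_of_pos ht s
  rw [← htdef]
  calc ‖iteratedFDeriv ℝ k (fun Y => (r Y) ^ s) X‖
      = ‖iteratedFDerivWithin ℝ k (fun Y => (r Y) ^ s) Ω X‖ :=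
        (congrArg norm (iteratedFDerivWithin_of_isOpen k hΩ hX)).symm
    _ = t ^ s * ‖iteratedFDerivWithin ℝ k (g ∘ h) Ω X‖ := by
        rw [hEq, iteratedFDerivWithin_const_smul_apply (hcd X hX) hΩ.uniqueDiffOn hX,
          norm_smul (t ^ s) (iteratedFDerivWithin ℝ k (g ∘ h) Ω X),
          Real.norm_eq_abs, abs_of_pos hrpow]
    _ ≤ t ^ s * ((Nat.factorial k : ℝ) * Cg * D ^ k) := by
        exact mul_le_mul_of_nonneg_left key hrpow.le
    _ = ((Nat.factorial k : ℝ) * Cg * K ^ k) * (t ^ s / t ^ ((k : ℝ) / 2)) := by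
        rw [hDdef, div_pow]
        have h1 : (Real.sqrt t) ^ k = t ^ ((k : ℝ) / 2) := by
          rw [← Real.rpow_natCast (Real.sqrt t) k, Real.sqrt_eq_rpow,
            ← Real.rpow_mul ht.le]
          congr 1
          ring
        rw [h1]; ring
    _ = ((Nat.factorial k : ℝ) * Cg * K ^ k) * t ^ (s - (k : ℝ) / 2) := by
        rw [← Real.rpow_sub ht]

/-- let `r` be a non-negative quadratic form on `ℝ^{2n}`, `s ∈ ℝ`, and
`Ω` open with `r(X) ≥ c⟨X⟩^{2β}` on `Ω` (`c, β > 0`, `⟨X⟩² = 1+‖X‖²`). Then every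
derivative of order `k` of `r^s` is bounded on `Ω` by `C_k r(X)^{s−k/2}`; in
particular `|∇(r^s)| ≤ C r^{s−1/2}` on `Ω`. -/
theorem power_of_quadratic_symbol_estimates (n : ℕ)
    (r : QuadraticForm ℝ (EuclideanSpace ℝ (Fin (2 * n)))) (hr : ∀ X, 0 ≤ r X)
    (s : ℝ) (Ω : Set (EuclideanSpace ℝ (Fin (2 * n)))) (hΩ : IsOpen Ω)
    (c β : ℝ) (hc : 0 < c) (hβ : 0 < β)
    (hlow : ∀ X ∈ Ω, c * (1 + ‖X‖ ^ 2) ^ β ≤ r X) :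
    (∀ k : ℕ, ∃ C > 0, ∀ X ∈ Ω,
      ‖iteratedFDeriv ℝ k (fun Y => (r Y) ^ s) X‖ ≤ C * (r X) ^ (s - (k : ℝ) / 2)) ∧
    (∃ C > 0, ∀ X ∈ Ω,
      ‖gradient (fun Y => (r Y) ^ s) X‖ ≤ C * (r X) ^ (s - 1 / 2)) := by
  have hpos : ∀ X ∈ Ω, 0 < r X := by
    intro X hX
    have h1 : (0 : ℝ) < c * (1 + ‖X‖ ^ 2) ^ β := by positivity
    exact lt_of_lt_of_le h1 (hlow X hX)
  constructor
  · intro k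
    exact quad_iterated_bound r hr s Ω hΩ hpos k
  · obtain ⟨C, hC, hb⟩ := quad_iterated_bound r hr s Ω hΩ hpos 1
    refine ⟨C, hC, fun X hX => ?_⟩
    have h1 : ‖gradient (fun Y => (r Y) ^ s) X‖ = ‖fderiv ℝ (fun Y => (r Y) ^ s) X‖ := by
      exact LinearIsometryEquiv.norm_map _ _
    have h2 : ‖fderiv ℝ (fun Y => (r Y) ^ s) X‖
        = ‖iteratedFDeriv ℝ 1 (fun Y => (r Y) ^ s) X‖ := by
      rw [← norm_iteratedFDeriv_fderiv (n := 0), norm_iteratedFDeriv_zero]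
    rw [h1, h2]
    have h3 := hb X hX
    have h4 : ((1 : ℕ) : ℝ) / 2 = 1 / 2 := by norm_num
    rw [h4] at h3
    exact h3
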